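/- Under the Logit model with constant unit costs, firm f's profit gradient factors as (∇_f π̂_f)(p) = Λ_f(p) φ_f(p) where Λ_f(p) = diag(w_j'(p_j) P_j(p))_{j∈J_f} and φ_f(p) = p_f - c_f - ζ_f(p) with ζ_j(p) = π̂_f(p) - 1/w_j'(p_j). In particular, since each diagonal entry of Λ_f(p) is nonzero for p ∈ (0,∞)^J, any local maximizer p_f ∈ (0,∞)^{J_f} of π̂_f(·, p_{-f}) satisfies the fixed-point equation p_j = c_j + π̂_f(p) + 1/|w_j'(p_j)| for all j ∈ J_f. -/

import Mathlib

open Filter Set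

theorem stmt_7 {J : ℕ} (w w' : Fin J → ℝ → ℝ) (v : Fin J → ℝ) (θ : ℝ)
    (c : Fin J → ℝ) (Jf : Finset (Fin J)) (hc : ∀ j, 0 ≤ c j)
    (hderiv : ∀ k : Fin J, ∀ x > (0:ℝ), HasDerivAt (w k) (w' k x) x)
    (hneg : ∀ k : Fin J, ∀ x > (0:ℝ), w' k x < 0) :
    let P : (Fin J → ℝ) → Fin J → ℝ := fun p j =>
      Real.exp (w j (p j) + v j) / (Real.exp θ + ∑ k, Real.exp (w k (p k) + v k))
    let profit : (Fin J → ℝ) → ℝ := fun p => ∑ j ∈ Jf, P p j * (p j - c j)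
    -- gradient factorization: D_j π̂_f = λ_j(p) * φ_j(p)
    (∀ p : Fin J → ℝ, (∀ i, 0 < p i) → ∀ j ∈ Jf,
      HasDerivAt (fun x => profit (Function.update p j x))
        ((w' j (p j) * P p j) * (p j - c j - (profit p - (w' j (p j))⁻¹))) (p j)) ∧
    -- fixed-point equation at any interior local maximizer of the firm's profit
    (∀ p : Fin J → ℝ, (∀ i, 0 < p i) →
      IsLocalMax (fun q : Fin J → ℝ =>
        profit (fun i => if i ∈ Jf then q i else p i)) p →
      ∀ j ∈ Jf, p j = c j + profit p + |w' j (p j)|⁻¹) := by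
  intro P profit
  have H1 : ∀ p : Fin J → ℝ, (∀ i, 0 < p i) → ∀ j ∈ Jf,
      HasDerivAt (fun x => profit (Function.update p j x))
        ((w' j (p j) * P p j) * (p j - c j - (profit p - (w' j (p j))⁻¹))) (p j) := by
    intro p hp j hj
    set e : Fin J → ℝ := fun k => Real.exp (w k (p k) + v k) with he
    set A : ℝ := ∑ k ∈ Jf.erase j, e k * (p k - c k) with hA
    set B : ℝ := Real.exp θ + ∑ k ∈ Finset.univ.erase j, e k with hB
    have hE0 : (0:ℝ) < e j := Real.exp_pos _
    have hBpos : (0:ℝ) < B := by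
      have : (0:ℝ) ≤ ∑ k ∈ Finset.univ.erase j, e k :=
        Finset.sum_nonneg fun k _ => (Real.exp_pos _).le
      have := Real.exp_pos θ; linarith
    have hD0 : B + e j ≠ 0 := by positivity
    -- the function equals a rational expression in x
    have hfun : (fun x => profit (Function.update p j x)) =
        fun x => (A + Real.exp (w j x + v j) * (x - c j)) / (B + Real.exp (w j x + v j)) := by
      funext x
      have hden : Real.exp θ + ∑ l, Real.exp (w l (Function.update p j x l) + v l)
          = B + Real.exp (w j x + v j) := by
        rw [hB, ← Finset.add_sum_erase Finset.univ
          (fun l => Real.exp (w l (Function.update p j x l) + v l)) (Finset.mem_univ j)]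
        rw [Function.update_self]
        have : ∑ l ∈ Finset.univ.erase j, Real.exp (w l (Function.update p j x l) + v l)
            = ∑ l ∈ Finset.univ.erase j, e l := by
          refine Finset.sum_congr rfl fun l hl => ?_
          rw [Function.update_of_ne (Finset.ne_of_mem_erase hl)]
        rw [this]; ring
      have hsumdiv : ∀ (D : ℝ), ∑ k ∈ Jf, (Real.exp (w k (Function.update p j x k) + v k) / D) *
            (Function.update p j x k - c k)
          = (∑ k ∈ Jf, Real.exp (w k (Function.update p j x k) + v k) *
            (Function.update p j x k - c k)) / D := by
        intro D
        rw [Finset.sum_div]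
        exact Finset.sum_congr rfl fun k _ => div_mul_eq_mul_div _ _ _
      simp only [profit, P, hden]
      rw [hsumdiv]
      congr 1
      rw [← Finset.add_sum_erase Jf _ hj, Function.update_self]
      have : ∑ k ∈ Jf.erase j, Real.exp (w k (Function.update p j x k) + v k) *
          (Function.update p j x k - c k) = A := by
        refine Finset.sum_congr rfl fun k hk => ?_
        rw [Function.update_of_ne (Finset.ne_of_mem_erase hk)]
      rw [this]; ring
    have hprofit : profit p = (A + e j * (p j - c j)) / (B + e j) := by
      have h2 : profit (Function.update p j (p j)) = profit p := by
        rw [Function.update_eq_self]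
      rw [← h2, congrFun hfun (p j)]
    -- derivative of the exponential piece
    have hEder : HasDerivAt (fun x => Real.exp (w j x + v j))
        (Real.exp (w j (p j) + v j) * w' j (p j)) (p j) := by
      have h := ((hderiv j (p j) (hp j)).add_const (v j)).exp
      simpa using h
    have hN : HasDerivAt (fun x => A + Real.exp (w j x + v j) * (x - c j))
        (Real.exp (w j (p j) + v j) * w' j (p j) * (p j - c j) +
          Real.exp (w j (p j) + v j) * 1) (p j) := by
      exact ((hasDerivAt_const (p j) A).add
        (hEder.mul ((hasDerivAt_id (p j)).sub_const (c j)))).congr_deriv (by simp only [id]; ring)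
    have hD : HasDerivAt (fun x => B + Real.exp (w j x + v j))
        (Real.exp (w j (p j) + v j) * w' j (p j)) (p j) := by
      exact ((hasDerivAt_const (p j) B).add hEder).congr_deriv (by ring)
    have hdiv : HasDerivAt (fun x => (A + Real.exp (w j x + v j) * (x - c j)) /
        (B + Real.exp (w j x + v j))) _ (p j) := hN.div hD (by simpa [hB, he] using hD0)
    rw [hfun]
    convert hdiv using 1
    have hw'ne : w' j (p j) ≠ 0 := (hneg j (p j) (hp j)).ne
    simp only [P, hprofit]
    have hDeq : Real.exp θ + ∑ k, Real.exp (w k (p k) + v k) = B + e j := by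
      rw [hB, ← Finset.add_sum_erase Finset.univ e (Finset.mem_univ j)]; ring
    rw [hDeq]
    rw [show Real.exp (w j (p j) + v j) = e j from rfl]
    field_simp
    ring
  refine ⟨H1, ?_⟩
  intro p hp hmax j hj
  have hkey : (fun x => profit (Function.update p j x)) =
      (fun x => (fun q : Fin J → ℝ => profit (fun i => if i ∈ Jf then q i else p i))
        (Function.update p j x)) := by
    funext x
    congr 1
    funext i
    by_cases hi : i ∈ Jf
    · simp [hi]
    · have : i ≠ j := fun h => hi (h ▸ hj)
      simp [hi, Function.update_of_ne this]
  have hcont : ContinuousAt (fun x : ℝ => Function.update p j x) (p j) :=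
    (continuous_const.update j continuous_id).continuousAt
  have hlm : IsLocalMax (fun x => profit (Function.update p j x)) (p j) := by
    rw [hkey]
    have h0 : Function.update p j (p j) = p := Function.update_eq_self j p
    have htend : Tendsto (fun x : ℝ => Function.update p j x) (nhds (p j)) (nhds p) := by
      have := hcont.tendsto
      rwa [h0] at this
    have hmax' : IsMaxFilter (fun q : Fin J → ℝ =>
        profit (fun i => if i ∈ Jf then q i else p i)) (nhds p)
        (Function.update p j (p j)) := by
      rw [h0]; exact hmax
    exact hmax'.comp_tendsto htend
  have hder := H1 p hp j hj
  have hzero := hlm.hasDerivAt_eq_zero hder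
  have hw' : w' j (p j) < 0 := hneg j (p j) (hp j)
  have hP : 0 < P p j := by
    have : (0:ℝ) < Real.exp θ + ∑ k, Real.exp (w k (p k) + v k) := by
      have : (0:ℝ) ≤ ∑ k, Real.exp (w k (p k) + v k) :=
        Finset.sum_nonneg fun k _ => (Real.exp_pos _).le
      have := Real.exp_pos θ; linarith
    exact div_pos (Real.exp_pos _) this
  have hfac : p j - c j - (profit p - (w' j (p j))⁻¹) = 0 := by
    have hne : w' j (p j) * P p j ≠ 0 := by
      exact mul_ne_zero hw'.ne hP.ne'
    exact (mul_eq_zero.mp hzero).resolve_left hne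
  have habs : |w' j (p j)|⁻¹ = -(w' j (p j))⁻¹ := by
    rw [abs_of_neg hw', inv_neg]
  rw [habs]; linarith
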